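/- Let n1, n2, r be natural numbers with r ≤ min(n1, n2), let X be a real n1 × n2 matrix with rank(X) = r, let S be a set of r row indices of X such that the r × n2 submatrix of X formed by the rows in S has rank r, and let Q be an invertible real r × r matrix. Then there exists exactly one pair (Y, Z) with Y a real n1 × r matrix, Z a real r × n2 matrix, X = Y·Z, and the r × r submatrix of Y formed by the rows in S equal to Q. -/

import Mathlib

/-- Remark 2 (deterministic content): if `X` is an `n1 × n2` real matrix of rank `r`,
`e` enumerates `r` rows of `X` whose submatrix has rank `r`, and `Q` is an invertible
`r × r` matrix, then there is exactly one factorization `X = Y * Z` with the `r × r`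
submatrix of `Y` formed by the rows in `e` equal to `Q`. -/
theorem stmt1 (n1 n2 r : ℕ) (hr : r ≤ min n1 n2)
    (X : Matrix (Fin n1) (Fin n2) ℝ) (e : Fin r ↪ Fin n1)
    (hrank : X.rank = r)
    (hsub : (X.submatrix (⇑e) id).rank = r)
    (Q : Matrix (Fin r) (Fin r) ℝ) (hQ : IsUnit Q) :
    ∃! YZ : Matrix (Fin n1) (Fin r) ℝ × Matrix (Fin r) (Fin n2) ℝ,
      X = YZ.1 * YZ.2 ∧ YZ.1.submatrix (⇑e) id = Q := by
  set A : Matrix (Fin r) (Fin n2) ℝ := X.submatrix (⇑e) id with hA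
  -- right inverse of A
  have hsurj : Function.Surjective A.mulVecLin := by
    rw [← LinearMap.range_eq_top]
    apply Submodule.eq_top_of_finrank_eq
    show A.rank = _
    rw [hsub, Module.finrank_fintype_fun_eq_card, Fintype.card_fin]
  obtain ⟨g, hg⟩ := A.mulVecLin.exists_rightInverse_of_surjective
    (LinearMap.range_eq_top.2 hsurj)
  set B : Matrix (Fin n2) (Fin r) ℝ := LinearMap.toMatrix' g with hB
  have hAB : A * B = 1 := by
    ext i j
    have h1 : A.mulVecLin (g (fun j' => if j' = j then 1 else 0))
        = (fun j' => if j' = j then 1 else 0) :=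
      LinearMap.congr_fun hg _
    have h2 : (A * B) i j = A.mulVecLin (g (fun j' => if j' = j then 1 else 0)) i := by
      simp [Matrix.mul_apply, Matrix.mulVecLin_apply, Matrix.mulVec, dotProduct,
        hB, LinearMap.toMatrix'_apply]
      have hps : (Pi.single j 1 : Fin r → ℝ) = fun j' => if j' = j then 1 else 0 := by
        ext k; simp [Pi.single_apply]
      rw [hps]
    rw [h2, h1]
    simp [Matrix.one_apply, eq_comm]
  -- row space equality
  have hle : LinearMap.range A.transpose.mulVecLin ≤ LinearMap.range X.transpose.mulVecLin := by
    rintro x ⟨v, rfl⟩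
    classical
    refine ⟨fun i => ∑ k, if e k = i then v k else 0, ?_⟩
    ext j
    simp only [Matrix.mulVecLin_apply, Matrix.mulVec, dotProduct,
      Matrix.transpose_apply, Finset.mul_sum, mul_ite, mul_zero]
    rw [Finset.sum_comm]
    simp [hA, Matrix.submatrix_apply]
  have hXT : X.transpose.rank = r := by rw [Matrix.rank_transpose, hrank]
  have hAT : A.transpose.rank = r := by rw [Matrix.rank_transpose, hsub]
  have heq : LinearMap.range A.transpose.mulVecLin = LinearMap.range X.transpose.mulVecLin := by
    apply Submodule.eq_of_le_of_finrank_le hle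
    show X.transpose.rank ≤ A.transpose.rank
    rw [hXT, hAT]
  -- build C
  have hrow : ∀ i : Fin n1, ∃ c : Fin r → ℝ, A.transpose.mulVecLin c = fun j => X i j := by
    intro i
    have : (fun j => X i j) ∈ LinearMap.range X.transpose.mulVecLin := by
      refine ⟨Pi.single i 1, ?_⟩
      ext j
      simp [Matrix.mulVecLin_apply, Matrix.mulVec, dotProduct, Pi.single_apply]
    rw [← heq] at this
    exact this
  choose C hC using hrow
  have hCA : X = Matrix.of C * A := by
    ext i j
    have := congrFun (hC i) j
    simp only [Matrix.mulVecLin_apply, Matrix.mulVec, dotProduct,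
      Matrix.transpose_apply] at this
    rw [← this]
    simp [Matrix.mul_apply, dotProduct, mul_comm]
  have hCsub : (Matrix.of C).submatrix (⇑e) id = 1 := by
    have h1 : (Matrix.of C).submatrix (⇑e) id * A = A := by
      ext i j
      have := congrFun (congrFun hCA (e i)) j
      simpa [Matrix.mul_apply, hA] using this.symm
    calc (Matrix.of C).submatrix (⇑e) id
        = (Matrix.of C).submatrix (⇑e) id * (A * B) := by rw [hAB, Matrix.mul_one]
      _ = 1 := by rw [← Matrix.mul_assoc, h1, hAB]
  -- inverse of Q
  have hQd : IsUnit Q.det := (Matrix.isUnit_iff_isUnit_det Q).1 hQ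
  have hQQi : Q * Q⁻¹ = 1 := Matrix.mul_nonsing_inv Q hQd
  have hQiQ : Q⁻¹ * Q = 1 := Matrix.nonsing_inv_mul Q hQd
  refine ⟨(Matrix.of C * Q, Q⁻¹ * A), ⟨?_, ?_⟩, ?_⟩
  · rw [Matrix.mul_assoc, ← Matrix.mul_assoc Q, hQQi, Matrix.one_mul, hCA]
  · show (Matrix.of C * Q).submatrix (⇑e) id = Q
    have : (Matrix.of C * Q).submatrix (⇑e) id = (Matrix.of C).submatrix (⇑e) id * Q := by
      ext i j; simp [Matrix.mul_apply]
    rw [this, hCsub, Matrix.one_mul]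
  · rintro ⟨Y, Z⟩ ⟨h1, h2⟩
    have hZ : Z = Q⁻¹ * A := by
      have hQZ : Q * Z = A := by
        have : (Y * Z).submatrix (⇑e) id = Y.submatrix (⇑e) id * Z := by
          ext i j; simp [Matrix.mul_apply]
        rw [hA, h1, this, h2]
      rw [← hQZ, ← Matrix.mul_assoc, hQiQ, Matrix.one_mul]
    have hZinv : (Q⁻¹ * A) * (B * Q) = 1 := by
      rw [Matrix.mul_assoc, ← Matrix.mul_assoc A, hAB, Matrix.one_mul, hQiQ]
    have e3 : Y * Z = Matrix.of C * Q * Z := by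
      rw [← h1, hZ, Matrix.mul_assoc (Matrix.of C) Q, ← Matrix.mul_assoc Q,
        hQQi, Matrix.one_mul, ← hCA]
    have hY : Y = Matrix.of C * Q := by
      have e1 : Y * Z * (B * Q) = Y := by
        rw [hZ, Matrix.mul_assoc, hZinv, Matrix.mul_one]
      have e2 : Matrix.of C * Q * Z * (B * Q) = Matrix.of C * Q := by
        rw [hZ, Matrix.mul_assoc, hZinv, Matrix.mul_one]
      rw [← e1, e3, e2]
    rw [Prod.ext_iff]
    exact ⟨hY, hZ⟩
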